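/- Let p ≥ 2. The set S = {ψ₀(γ) : γ ∈ (−1,1)} is a measurable cross section for the action of O_{p−1} × O_{p−1} on O_p⁺ = {ψ ∈ O_p : |ψ₁₁| < 1} given by (h₁,k₁)·ψ = diag(1,h₁) ψ diag(1,k₁)ᵀ: S is a Borel subset of O_p⁺ and the orbit of every ψ ∈ O_p⁺ intersects S in exactly one point, namely ψ₀(ψ₁₁). -/

import Mathlib

open MeasureTheory Matrix

/-- The (Borel = product) σ-algebra on real matrices. -/
instance matMeas (m n : ℕ) : MeasurableSpace (Matrix (Fin m) (Fin n) ℝ) := MeasurableSpace.pi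

/-- `μ` is the Haar probability distribution on the orthogonal group `O_p`, viewed as a Borel
probability measure on the space of `p × p` real matrices which is concentrated on the set of
orthogonal matrices and invariant under left and right translation by orthogonal matrices. -/
def IsHaarOrthogonal (p : ℕ) (μ : Measure (Matrix (Fin p) (Fin p) ℝ)) : Prop :=
  IsProbabilityMeasure μ ∧
  μ {A | A ∈ Matrix.orthogonalGroup (Fin p) ℝ} = 1 ∧
  (∀ g ∈ Matrix.orthogonalGroup (Fin p) ℝ, Measure.map (fun A => g * A) μ = μ) ∧
  (∀ g ∈ Matrix.orthogonalGroup (Fin p) ℝ, Measure.map (fun A => A * g) μ = μ)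

/-- The density `f(x|p) = Γ(p/2)/(Γ(1/2)Γ((p-1)/2)) (1-x²)^((p-3)/2)` on `(-1,1)`,
extended by `0` outside `(-1,1)`. -/
noncomputable def haarEntryDensity (p : ℕ) (x : ℝ) : ENNReal :=
  ENNReal.ofReal (if x ∈ Set.Ioo (-1 : ℝ) 1 then
    (Real.Gamma ((p : ℝ) / 2) / (Real.Gamma (1 / 2) * Real.Gamma (((p : ℝ) - 1) / 2))) *
      (1 - x ^ 2) ^ (((p : ℝ) - 3) / 2)
  else 0)

/-- `ν` is the uniform distribution on the unit sphere `S^{k-1} ⊆ ℝ^k`, viewed as the unique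
rotation-invariant Borel probability measure on `ℝ^k` concentrated on the unit sphere. -/
def IsUniformOnSphere (k : ℕ) (ν : Measure (EuclideanSpace ℝ (Fin k))) : Prop :=
  IsProbabilityMeasure ν ∧ ν {u | ‖u‖ = 1} = 1 ∧
  ∀ L : EuclideanSpace ℝ (Fin k) ≃ₗᵢ[ℝ] EuclideanSpace ℝ (Fin k), Measure.map L ν = ν

/-- The `(n+1) × (n+1)` block-diagonal matrix `diag(γ, Δ)` with scalar block `γ` and lower
block `Δ`. -/
def cornerBlock {n : ℕ} (γ : ℝ) (Δ : Matrix (Fin n) (Fin n) ℝ) :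
    Matrix (Fin (n + 1)) (Fin (n + 1)) ℝ :=
  Matrix.of fun i j =>
    if hi : i = 0 then (if j = 0 then γ else 0)
    else if hj : j = 0 then 0
    else Δ (i.pred hi) (j.pred hj)

/-- The matrix `ψ₀(γ)`: the `p × p` orthogonal matrix whose first row and first column both
equal `(γ, √(1-γ²), 0, …, 0)` and whose lower-right `(p-1) × (p-1)` block is
`diag(-γ, I_{p-2})` (here `p = n+2`). -/
noncomputable def psi0 (n : ℕ) (γ : ℝ) : Matrix (Fin (n + 2)) (Fin (n + 2)) ℝ :=
  Matrix.of fun i j =>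
    if i = 0 then (if j = 0 then γ else if j = 1 then Real.sqrt (1 - γ ^ 2) else 0)
    else if i = 1 then (if j = 0 then Real.sqrt (1 - γ ^ 2) else if j = 1 then -γ else 0)
    else if i = j then 1 else 0

/-- The reflection (Householder) matrix `I - 2 w wᵀ / (wᵀ w)`. -/
noncomputable def reflMatrix (p : ℕ) (w : Fin p → ℝ) : Matrix (Fin p) (Fin p) ℝ :=
  1 - (2 / (w ⬝ᵥ w)) • Matrix.vecMulVec w w

section lemmas
variable {n : ℕ}

lemma fin_sum_split (f : Fin (n+2) → ℝ) :
    ∑ k, f k = f 0 + f 1 + ∑ a : Fin n, f a.succ.succ := by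
  rw [Fin.sum_univ_succ, Fin.sum_univ_succ, ← add_assoc, Fin.succ_zero_eq_one]

lemma ss_ne_zero (a : Fin n) : (a.succ.succ : Fin (n+2)) ≠ 0 := Fin.succ_ne_zero _
lemma ss_ne_one (a : Fin n) : (a.succ.succ : Fin (n+2)) ≠ 1 := by
  rw [← Fin.succ_zero_eq_one]
  exact fun h => Fin.succ_ne_zero a (Fin.succ_injective _ h)
lemma one_ne_zero_fin : (1 : Fin (n+2)) ≠ 0 := by
  rw [← Fin.succ_zero_eq_one]; exact Fin.succ_ne_zero _

-- cornerBlock entries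
@[simp] lemma cornerBlock_zero_zero (γ : ℝ) (Δ : Matrix (Fin n) (Fin n) ℝ) :
    cornerBlock γ Δ 0 0 = γ := by simp [cornerBlock]
@[simp] lemma cornerBlock_zero_succ (γ : ℝ) (Δ : Matrix (Fin n) (Fin n) ℝ) (j : Fin n) :
    cornerBlock γ Δ 0 j.succ = 0 := by simp [cornerBlock, Fin.succ_ne_zero]
@[simp] lemma cornerBlock_succ_zero (γ : ℝ) (Δ : Matrix (Fin n) (Fin n) ℝ) (i : Fin n) :
    cornerBlock γ Δ i.succ 0 = 0 := by simp [cornerBlock, Fin.succ_ne_zero]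
@[simp] lemma cornerBlock_succ_succ (γ : ℝ) (Δ : Matrix (Fin n) (Fin n) ℝ) (i j : Fin n) :
    cornerBlock γ Δ i.succ j.succ = Δ i j := by
  simp [cornerBlock, Fin.succ_ne_zero, Fin.pred_succ]

@[simp] lemma psi0_00 (γ : ℝ) : psi0 n γ 0 0 = γ := by simp [psi0]
@[simp] lemma psi0_01 (γ : ℝ) : psi0 n γ 0 1 = Real.sqrt (1 - γ^2) := by
  simp [psi0, one_ne_zero_fin]
@[simp] lemma psi0_0ss (γ : ℝ) (a : Fin n) : psi0 n γ 0 a.succ.succ = 0 := by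
  simp [psi0, ss_ne_zero, ss_ne_one]
@[simp] lemma psi0_10 (γ : ℝ) : psi0 n γ 1 0 = Real.sqrt (1 - γ^2) := by
  simp [psi0, one_ne_zero_fin]
@[simp] lemma psi0_11 (γ : ℝ) : psi0 n γ 1 1 = -γ := by simp [psi0, one_ne_zero_fin]
@[simp] lemma psi0_1ss (γ : ℝ) (a : Fin n) : psi0 n γ 1 a.succ.succ = 0 := by
  simp [psi0, one_ne_zero_fin, ss_ne_zero, ss_ne_one]
@[simp] lemma psi0_ss0 (γ : ℝ) (a : Fin n) : psi0 n γ a.succ.succ 0 = 0 := by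
  simp [psi0, ss_ne_zero, ss_ne_one, (ss_ne_zero a).symm]
@[simp] lemma psi0_ss1 (γ : ℝ) (a : Fin n) : psi0 n γ a.succ.succ 1 = 0 := by
  simp [psi0, ss_ne_zero, ss_ne_one, (ss_ne_one a).symm]
@[simp] lemma psi0_ssss (γ : ℝ) (a b : Fin n) :
    psi0 n γ a.succ.succ b.succ.succ = if a = b then 1 else 0 := by
  simp [psi0, ss_ne_zero, ss_ne_one, Fin.succ_inj]

end lemmas

section orth
variable {n : ℕ}

lemma fin2_cases (i : Fin (n+2)) : i = 0 ∨ i = 1 ∨ ∃ a : Fin n, i = a.succ.succ := by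
  rcases Fin.eq_zero_or_eq_succ i with h | ⟨j, rfl⟩
  · left; exact h
  rcases Fin.eq_zero_or_eq_succ j with h | ⟨a, rfl⟩
  · right; left; rw [h, Fin.succ_zero_eq_one]
  · right; right; exact ⟨a, rfl⟩

lemma psi0_symm (γ : ℝ) : (psi0 n γ)ᵀ = psi0 n γ := by
  ext i j
  rcases fin2_cases i with rfl | rfl | ⟨a, rfl⟩ <;>
    rcases fin2_cases j with rfl | rfl | ⟨b, rfl⟩ <;>
    simp [transpose_apply, eq_comm]

lemma psi0_mul_self (γ : ℝ) (h : 0 ≤ 1 - γ^2) : psi0 n γ * psi0 n γ = 1 := by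
  ext i j
  rw [mul_apply, fin_sum_split]
  rcases fin2_cases i with rfl | rfl | ⟨a, rfl⟩ <;>
    rcases fin2_cases j with rfl | rfl | ⟨b, rfl⟩ <;>
    simp [one_apply, one_ne_zero_fin, one_ne_zero_fin.symm, ss_ne_zero, ss_ne_one,
      (ss_ne_zero _).symm, (ss_ne_one _).symm, Real.mul_self_sqrt h, Fin.succ_inj,
      Finset.sum_ite_eq, mul_comm] <;> ring

lemma star_eq_transpose (A : Matrix (Fin m) (Fin m) ℝ) : star A = Aᵀ := by
  ext i j; simp [Matrix.star_apply]

lemma psi0_mem (γ : ℝ) (h : 0 ≤ 1 - γ^2) :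
    psi0 n γ ∈ Matrix.orthogonalGroup (Fin (n+2)) ℝ := by
  rw [Matrix.mem_orthogonalGroup_iff, psi0_symm, psi0_mul_self γ h]

lemma fin1_sum_split (f : Fin (n+1) → ℝ) :
    ∑ k, f k = f 0 + ∑ a : Fin n, f a.succ := Fin.sum_univ_succ f

lemma cornerBlock_transpose (γ : ℝ) (Δ : Matrix (Fin n) (Fin n) ℝ) :
    (cornerBlock γ Δ)ᵀ = cornerBlock γ Δᵀ := by
  ext i j
  rcases Fin.eq_zero_or_eq_succ i with rfl | ⟨a, rfl⟩ <;>
    rcases Fin.eq_zero_or_eq_succ j with rfl | ⟨b, rfl⟩ <;> simp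

lemma cornerBlock_mul (γ γ' : ℝ) (Δ Δ' : Matrix (Fin n) (Fin n) ℝ) :
    cornerBlock γ Δ * cornerBlock γ' Δ' = cornerBlock (γ * γ') (Δ * Δ') := by
  ext i j
  rw [mul_apply, fin1_sum_split]
  rcases Fin.eq_zero_or_eq_succ i with rfl | ⟨a, rfl⟩ <;>
    rcases Fin.eq_zero_or_eq_succ j with rfl | ⟨b, rfl⟩ <;> simp [mul_apply]

lemma cornerBlock_one : cornerBlock 1 (1 : Matrix (Fin n) (Fin n) ℝ) = 1 := by
  ext i j
  rcases Fin.eq_zero_or_eq_succ i with rfl | ⟨a, rfl⟩ <;>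
    rcases Fin.eq_zero_or_eq_succ j with rfl | ⟨b, rfl⟩ <;>
    simp [one_apply, Fin.succ_ne_zero, (Fin.succ_ne_zero _).symm, Fin.succ_inj]

lemma cornerBlock_mem {h : Matrix (Fin n) (Fin n) ℝ}
    (hh : h ∈ Matrix.orthogonalGroup (Fin n) ℝ) :
    cornerBlock 1 h ∈ Matrix.orthogonalGroup (Fin (n+1)) ℝ := by
  rw [Matrix.mem_orthogonalGroup_iff] at hh ⊢
  rw [cornerBlock_transpose, cornerBlock_mul, hh, mul_one, cornerBlock_one]

lemma cornerBlock_mul_row_zero (h : Matrix (Fin n) (Fin n) ℝ)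
    (M : Matrix (Fin (n+1)) (Fin (n+1)) ℝ) (j : Fin (n+1)) :
    (cornerBlock 1 h * M) 0 j = M 0 j := by
  rw [mul_apply, fin1_sum_split]; simp

lemma mul_cornerBlock_col_zero (k : Matrix (Fin n) (Fin n) ℝ)
    (M : Matrix (Fin (n+1)) (Fin (n+1)) ℝ) (i : Fin (n+1)) :
    (M * cornerBlock 1 k) i 0 = M i 0 := by
  rw [mul_apply, fin1_sum_split]; simp

lemma orbit_entry_00 {h k : Matrix (Fin (n+1)) (Fin (n+1)) ℝ}
    (ψ : Matrix (Fin (n+2)) (Fin (n+2)) ℝ) :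
    (cornerBlock 1 h * ψ * (cornerBlock 1 k)ᵀ) 0 0 = ψ 0 0 := by
  rw [cornerBlock_transpose, mul_cornerBlock_col_zero, cornerBlock_mul_row_zero]

section householder
variable {m : ℕ}

lemma vecMulVec_sq (w : Fin m → ℝ) :
    Matrix.vecMulVec w w * Matrix.vecMulVec w w = (w ⬝ᵥ w) • Matrix.vecMulVec w w := by
  ext i j
  simp only [mul_apply, vecMulVec_apply, Matrix.smul_apply, smul_eq_mul, dotProduct, Finset.sum_mul]
  exact Finset.sum_congr rfl fun k _ => by ring

lemma vecMulVec_mulVec' (w u : Fin m → ℝ) :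
    Matrix.vecMulVec w w *ᵥ u = (w ⬝ᵥ u) • w := by
  ext i
  simp only [Matrix.mulVec, vecMulVec_apply, dotProduct, Pi.smul_apply, smul_eq_mul,
    Finset.sum_mul]
  exact Finset.sum_congr rfl fun k _ => by ring

lemma refl_transpose (w : Fin m → ℝ) : (reflMatrix m w)ᵀ = reflMatrix m w := by
  unfold reflMatrix
  ext i j
  simp [transpose_apply, vecMulVec_apply, one_apply, eq_comm]
  ring_nf
  by_cases h : i = j <;> simp [h, mul_comm]

lemma refl_mul_self {w : Fin m → ℝ} (hw : w ⬝ᵥ w ≠ 0) :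
    reflMatrix m w * reflMatrix m w = 1 := by
  have hVV := vecMulVec_sq w
  unfold reflMatrix
  simp only [Matrix.sub_mul, Matrix.mul_sub, one_mul, mul_one, Matrix.smul_mul,
    Matrix.mul_smul, smul_smul, smul_sub, hVV]
  have h2 : (2 / (w ⬝ᵥ w)) * ((2 / (w ⬝ᵥ w)) * (w ⬝ᵥ w)) = 2 / (w ⬝ᵥ w) + 2 / (w ⬝ᵥ w) := by
    field_simp; norm_num
  rw [h2, add_smul]
  abel

lemma refl_mem {w : Fin m → ℝ} (hw : w ⬝ᵥ w ≠ 0) :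
    reflMatrix m w ∈ Matrix.orthogonalGroup (Fin m) ℝ := by
  rw [Matrix.mem_orthogonalGroup_iff, refl_transpose, refl_mul_self hw]

lemma refl_mulVec (w u : Fin m → ℝ) :
    reflMatrix m w *ᵥ u = u - (2 / (w ⬝ᵥ w) * (w ⬝ᵥ u)) • w := by
  unfold reflMatrix
  rw [Matrix.sub_mulVec, Matrix.one_mulVec, Matrix.smul_mulVec, vecMulVec_mulVec',
    smul_smul]

lemma householder (u : Fin (m+1) → ℝ) (s : ℝ) (hs : s ≠ 0) (hu : u ⬝ᵥ u = s^2) :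
    ∃ h ∈ Matrix.orthogonalGroup (Fin (m+1)) ℝ,
      h *ᵥ u = s • (Pi.single 0 1 : Fin (m+1) → ℝ) := by
  set e : Fin (m+1) → ℝ := s • (Pi.single 0 1 : Fin (m+1) → ℝ) with he
  set w : Fin (m+1) → ℝ := u - e with hwdef
  have heu : e ⬝ᵥ u = s * u 0 := by
    rw [he, smul_dotProduct, single_dotProduct, one_mul, smul_eq_mul]
  have hue : u ⬝ᵥ e = s * u 0 := by
    rw [he, dotProduct_smul, dotProduct_single, mul_one, smul_eq_mul, mul_comm]
  have hee : e ⬝ᵥ e = s^2 := by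
    rw [he, smul_dotProduct, dotProduct_smul, single_dotProduct]
    simp [Pi.single_apply, sq]
  by_cases hw : w = 0
  · refine ⟨1, one_mem _, ?_⟩
    rw [Matrix.one_mulVec]
    exact sub_eq_zero.mp (hwdef ▸ hw)
  · have hww : w ⬝ᵥ w ≠ 0 := fun h => hw (dotProduct_self_eq_zero.mp h)
    have hwu : w ⬝ᵥ u = s^2 - s * u 0 := by
      rw [hwdef, sub_dotProduct, hu, heu]
    have hww2 : w ⬝ᵥ w = 2 * (s^2 - s * u 0) := by
      rw [hwdef, sub_dotProduct, dotProduct_sub, dotProduct_sub,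
        hu, hue, heu, hee]
      ring
    refine ⟨reflMatrix (m+1) w, refl_mem hww, ?_⟩
    rw [refl_mulVec, hwu, hww2]
    have hne : s^2 - s * u 0 ≠ 0 := by
      intro h0; rw [hww2, h0, mul_zero] at hww; exact hww rfl
    have h1 : 2 / (2 * (s ^ 2 - s * u 0)) * (s ^ 2 - s * u 0) = 1 := by field_simp; exact div_self (fun h => hne (by rw [sq, ← mul_sub, h, mul_zero]))
    rw [h1, one_smul, hwdef]
    abel

end householder

section main
variable {n : ℕ}

lemma rowsum {p : ℕ} {A : Matrix (Fin p) (Fin p) ℝ}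
    (h : A ∈ Matrix.orthogonalGroup (Fin p) ℝ) (i j : Fin p) :
    ∑ k, A i k * A j k = (1 : Matrix (Fin p) (Fin p) ℝ) i j := by
  have h1 := h
  rw [Matrix.mem_orthogonalGroup_iff] at h1
  have := congrFun (congrFun h1 i) j
  rwa [mul_apply] at this

lemma colsum {p : ℕ} {A : Matrix (Fin p) (Fin p) ℝ}
    (h : A ∈ Matrix.orthogonalGroup (Fin p) ℝ) (i j : Fin p) :
    ∑ k, A k i * A k j = (1 : Matrix (Fin p) (Fin p) ℝ) i j := by
  have h1 := h
  rw [Matrix.mem_orthogonalGroup_iff'] at h1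
  have := congrFun (congrFun h1 i) j
  rw [mul_apply] at this
  simpa [transpose_apply, mul_comm] using this

lemma orbit_psi0 (ψ : Matrix (Fin (n+2)) (Fin (n+2)) ℝ)
    (hψ : ψ ∈ Matrix.orthogonalGroup (Fin (n+2)) ℝ) (hγ : |ψ 0 0| < 1) :
    ∃ h₁ k₁ : Matrix (Fin (n+1)) (Fin (n+1)) ℝ,
      h₁ ∈ Matrix.orthogonalGroup (Fin (n+1)) ℝ ∧
      k₁ ∈ Matrix.orthogonalGroup (Fin (n+1)) ℝ ∧
      psi0 n (ψ 0 0) = cornerBlock 1 h₁ * ψ * (cornerBlock 1 k₁)ᵀ := by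
  set γ : ℝ := ψ 0 0 with hγdef
  have hγ2 : γ^2 < 1 := by
    have := abs_lt.mp hγ
    nlinarith [this.1, this.2]
  have hpos : (0:ℝ) < 1 - γ^2 := by linarith
  set s : ℝ := Real.sqrt (1 - γ^2) with hsdef
  have hs2 : s^2 = 1 - γ^2 := Real.sq_sqrt hpos.le
  have hs : s ≠ 0 := by positivity
  -- row vector
  set u : Fin (n+1) → ℝ := fun a => ψ 0 a.succ with hu
  have huu : u ⬝ᵥ u = s^2 := by
    have h1 := rowsum hψ 0 0
    rw [Fin.sum_univ_succ, one_apply_eq] at h1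
    have : γ * γ + u ⬝ᵥ u = 1 := h1
    rw [hs2]; nlinarith [this]
  obtain ⟨k₀, hk₀mem, hk₀⟩ := householder u s hs huu
  set M : Matrix (Fin (n+2)) (Fin (n+2)) ℝ := ψ * cornerBlock 1 k₀ᵀ with hM
  have hMmem : M ∈ Matrix.orthogonalGroup (Fin (n+2)) ℝ := by
    apply mul_mem hψ
    have := Unitary.star_mem (cornerBlock_mem hk₀mem)
    rwa [star_eq_transpose, cornerBlock_transpose] at this
  have hM00 : M 0 0 = γ := by rw [hM, mul_cornerBlock_col_zero]
  have hMrow : ∀ a : Fin (n+1), M 0 a.succ = s * (Pi.single 0 1 : Fin (n+1) → ℝ) a := by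
    intro a
    have : M 0 a.succ = (k₀ *ᵥ u) a := by
      rw [hM, mul_apply, Fin.sum_univ_succ]
      simp only [transpose_apply, cornerBlock_zero_succ, mul_zero, zero_add, Matrix.mulVec]
      simp only [cornerBlock_succ_succ, transpose_apply, dotProduct]
      exact Finset.sum_congr rfl fun c _ => mul_comm _ _
    rw [this, hk₀]
    simp
  -- column vector
  set v : Fin (n+1) → ℝ := fun a => M a.succ 0 with hv
  have hvv : v ⬝ᵥ v = s^2 := by
    have h1 := colsum hMmem 0 0
    rw [Fin.sum_univ_succ, one_apply_eq, hM00] at h1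
    have : γ * γ + v ⬝ᵥ v = 1 := h1
    rw [hs2]; nlinarith [this]
  obtain ⟨h₀, hh₀mem, hh₀⟩ := householder v s hs hvv
  set N : Matrix (Fin (n+2)) (Fin (n+2)) ℝ := cornerBlock 1 h₀ * M with hN
  have hNmem : N ∈ Matrix.orthogonalGroup (Fin (n+2)) ℝ :=
    mul_mem (cornerBlock_mem hh₀mem) hMmem
  have hNrow0 : ∀ j, N 0 j = M 0 j := fun j => by rw [hN, cornerBlock_mul_row_zero]
  have hN00 : N 0 0 = γ := by rw [hNrow0, hM00]
  have hN01 : N 0 1 = s := by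
    rw [hNrow0, ← Fin.succ_zero_eq_one, hMrow]; simp
  have hN0ss : ∀ a : Fin n, N 0 a.succ.succ = 0 := by
    intro a
    rw [hNrow0, hMrow]
    simp [Pi.single_apply, Fin.succ_ne_zero]
  have hNcol : ∀ a : Fin (n+1), N a.succ 0 = s * (Pi.single 0 1 : Fin (n+1) → ℝ) a := by
    intro a
    have : N a.succ 0 = (h₀ *ᵥ v) a := by
      rw [hN, mul_apply, Fin.sum_univ_succ, cornerBlock_succ_zero, zero_mul, zero_add,
        Matrix.mulVec]
      simp only [cornerBlock_succ_succ, dotProduct]; rfl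
    rw [this, hh₀]
    simp
  have hN10 : N 1 0 = s := by
    rw [← Fin.succ_zero_eq_one, hNcol]; simp
  have hNss0 : ∀ a : Fin n, N a.succ.succ 0 = 0 := by
    intro a
    rw [hNcol a.succ]
    simp [Pi.single_apply, Fin.succ_ne_zero]
  have hN11 : N 1 1 = -γ := by
    have h01 := rowsum hNmem 0 1
    rw [fin_sum_split, hN00, hN10, hN01, one_apply_ne one_ne_zero_fin.symm] at h01
    simp only [hN0ss, zero_mul, Finset.sum_const_zero, add_zero] at h01
    have hfac : s * (γ + N 1 1) = 0 := by linarith [h01]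
    have := (mul_eq_zero.mp hfac).resolve_left hs
    linarith
  have hsumrow : ∑ b : Fin n, N 1 b.succ.succ * N 1 b.succ.succ = 0 := by
    have h11 := rowsum hNmem 1 1
    rw [fin_sum_split, hN10, hN11, one_apply_eq] at h11
    nlinarith [h11, hs2]
  have hN1ss : ∀ b : Fin n, N 1 b.succ.succ = 0 := by
    intro b
    have hb := (Finset.sum_eq_zero_iff_of_nonneg
      (fun c _ => mul_self_nonneg (N 1 c.succ.succ))).mp hsumrow b (Finset.mem_univ b)
    exact (mul_self_eq_zero).mp hb
  have hsumcol : ∑ b : Fin n, N b.succ.succ 1 * N b.succ.succ 1 = 0 := by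
    have h11 := colsum hNmem 1 1
    rw [fin_sum_split, hN01, hN11, one_apply_eq] at h11
    nlinarith [h11, hs2]
  have hNss1 : ∀ b : Fin n, N b.succ.succ 1 = 0 := by
    intro b
    have hb := (Finset.sum_eq_zero_iff_of_nonneg
      (fun c _ => mul_self_nonneg (N c.succ.succ 1))).mp hsumcol b (Finset.mem_univ b)
    exact (mul_self_eq_zero).mp hb
  -- lower-right block
  set Q : Matrix (Fin n) (Fin n) ℝ :=
    Matrix.of (fun a b => N a.succ.succ b.succ.succ) with hQdef
  have hQapp : ∀ a b, Q a b = N a.succ.succ b.succ.succ := fun a b => rfl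
  have hQorth : ∀ a b, ∑ c, Q a c * Q b c = (1 : Matrix (Fin n) (Fin n) ℝ) a b := by
    intro a b
    have h2 := rowsum hNmem a.succ.succ b.succ.succ
    rw [fin_sum_split, hNss0 a, hNss0 b, hNss1 a, hNss1 b] at h2
    simp only [zero_mul, mul_zero, zero_add] at h2
    simp only [hQapp]
    rw [h2]
    simp [one_apply, Fin.succ_inj]
  have hQmem : Q ∈ Matrix.orthogonalGroup (Fin n) ℝ := by
    rw [Matrix.mem_orthogonalGroup_iff]
    ext a b
    rw [mul_apply]
    simp only [transpose_apply]
    exact hQorth a b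
  -- final assembly
  set D : Matrix (Fin (n+2)) (Fin (n+2)) ℝ := cornerBlock 1 (cornerBlock 1 Qᵀ) with hDdef
  have hD00 : D 0 0 = 1 := cornerBlock_zero_zero _ _
  have hD0s : ∀ a : Fin (n+1), D 0 a.succ = 0 := fun a => cornerBlock_zero_succ _ _ a
  have hDs0 : ∀ a : Fin (n+1), D a.succ 0 = 0 := fun a => cornerBlock_succ_zero _ _ a
  have hD01 : D 0 1 = 0 := by rw [← Fin.succ_zero_eq_one]; exact hD0s 0
  have hD10 : D 1 0 = 0 := by rw [← Fin.succ_zero_eq_one]; exact hDs0 0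
  have hD11 : D 1 1 = 1 := by
    rw [← Fin.succ_zero_eq_one, hDdef, cornerBlock_succ_succ, cornerBlock_zero_zero]
  have hD1ss : ∀ b : Fin n, D 1 b.succ.succ = 0 := by
    intro b
    rw [← Fin.succ_zero_eq_one, hDdef, cornerBlock_succ_succ, cornerBlock_zero_succ]
  have hDss1 : ∀ a : Fin n, D a.succ.succ 1 = 0 := by
    intro a
    rw [← Fin.succ_zero_eq_one, hDdef, cornerBlock_succ_succ, cornerBlock_succ_zero]
  have hDssss : ∀ a b : Fin n, D a.succ.succ b.succ.succ = Q b a := by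
    intro a b
    rw [hDdef, cornerBlock_succ_succ, cornerBlock_succ_succ, transpose_apply]
  have final : psi0 n γ = N * D := by
    ext i j
    rw [mul_apply, fin_sum_split]
    rcases fin2_cases i with rfl | rfl | ⟨a, rfl⟩ <;>
      rcases fin2_cases j with rfl | rfl | ⟨b, rfl⟩
    · simp [hN00, hD00, hD10, hDs0, hN0ss]
    · simp [hD01, hD11, hDss1, hN01, hN0ss, hsdef]
    · simp [hD0s, hD1ss, hN0ss]
    · simp [hN10, hD00, hD10, hDs0, hN1ss, hsdef]
    · simp [hD01, hD11, hDss1, hN11, hN1ss]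
    · simp [hD0s, hD1ss, hN1ss]
    · simp [hNss0, hNss1, hD10, hDs0]
    · simp [hD01, hD11, hDss1, hNss0, hNss1]
    · have h3 := hQorth a b
      simp only [hQapp] at h3
      simp only [psi0_ssss, hNss0 a, hNss1 a, hD0s, hD1ss, hDssss, hQapp, zero_mul,
        mul_zero, zero_add]
      rw [h3, one_apply]
  refine ⟨h₀, cornerBlock 1 Q * k₀, hh₀mem, mul_mem (cornerBlock_mem hQmem) hk₀mem, ?_⟩
  have htr : (cornerBlock 1 (cornerBlock 1 Q * k₀))ᵀ = cornerBlock 1 k₀ᵀ * D := by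
    rw [cornerBlock_transpose, transpose_mul, cornerBlock_transpose, hDdef,
      cornerBlock_mul, one_mul]
  rw [htr, ← mul_assoc, mul_assoc (cornerBlock 1 h₀), ← hM, ← hN]
  exact final
end main
/-- Proposition 2.3.  Let `p = n+2 ≥ 2`.  The set
`S = {ψ₀(γ) : γ ∈ (-1,1)}` is a measurable cross section for the action
`(h₁,k₁)·ψ = diag(1,h₁) ψ diag(1,k₁)ᵀ` of `O_{p-1} × O_{p-1}` on
`O_p⁺ = {ψ ∈ O_p : |ψ₁₁| < 1}`: `S` is a Borel subset of `O_p⁺`, and the orbit of each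
`ψ ∈ O_p⁺` meets `S` in exactly one point, namely `ψ₀(ψ₁₁)`. -/
theorem cross_section_measurable_and_unique (n : ℕ) :
    MeasurableSet {A : Matrix (Fin (n + 2)) (Fin (n + 2)) ℝ |
        ∃ γ ∈ Set.Ioo (-1 : ℝ) 1, A = psi0 n γ} ∧
    {A : Matrix (Fin (n + 2)) (Fin (n + 2)) ℝ | ∃ γ ∈ Set.Ioo (-1 : ℝ) 1, A = psi0 n γ}
      ⊆ {A | A ∈ Matrix.orthogonalGroup (Fin (n + 2)) ℝ ∧ |A 0 0| < 1} ∧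
    ∀ ψ : Matrix (Fin (n + 2)) (Fin (n + 2)) ℝ,
      ψ ∈ Matrix.orthogonalGroup (Fin (n + 2)) ℝ → |ψ 0 0| < 1 →
      {A : Matrix (Fin (n + 2)) (Fin (n + 2)) ℝ |
          (∃ h₁ k₁ : Matrix (Fin (n + 1)) (Fin (n + 1)) ℝ,
            h₁ ∈ Matrix.orthogonalGroup (Fin (n + 1)) ℝ ∧
            k₁ ∈ Matrix.orthogonalGroup (Fin (n + 1)) ℝ ∧
            A = cornerBlock 1 h₁ * ψ * (cornerBlock 1 k₁)ᵀ) ∧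
          ∃ γ ∈ Set.Ioo (-1 : ℝ) 1, A = psi0 n γ}
        = {psi0 n (ψ 0 0)} := by
  have hev : ∀ i j : Fin (n+2), Measurable (fun A : Matrix (Fin (n+2)) (Fin (n+2)) ℝ => A i j) :=
    fun i j => (measurable_pi_apply (X := fun _ : Fin (n+2) => ℝ) j).comp
      (measurable_pi_apply (X := fun _ : Fin (n+2) => (Fin (n+2) → ℝ)) i)
  have hpsi : ∀ i j : Fin (n+2), Measurable (fun γ : ℝ => psi0 n γ i j) := by
    intro i j
    have hsqrt : Measurable (fun γ : ℝ => Real.sqrt (1 - γ^2)) :=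
      Real.continuous_sqrt.measurable.comp ((measurable_id.pow_const 2).const_sub 1)
    simp only [psi0, Matrix.of_apply]
    split_ifs <;>
      first
        | exact measurable_id
        | exact hsqrt
        | exact measurable_id.neg
        | exact measurable_const
  refine ⟨?_, ?_, ?_⟩
  · have hset : {A : Matrix (Fin (n+2)) (Fin (n+2)) ℝ | ∃ γ ∈ Set.Ioo (-1:ℝ) 1, A = psi0 n γ}
        = {A : Matrix (Fin (n+2)) (Fin (n+2)) ℝ | A 0 0 ∈ Set.Ioo (-1:ℝ) 1} ∩
          ⋂ i, ⋂ j, {A : Matrix (Fin (n+2)) (Fin (n+2)) ℝ | A i j = psi0 n (A 0 0) i j} := by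
      ext A
      simp only [Set.mem_setOf_eq, Set.mem_inter_iff, Set.mem_iInter]
      constructor
      · rintro ⟨γ, hγ, rfl⟩
        rw [psi0_00]
        exact ⟨hγ, fun i j => rfl⟩
      · rintro ⟨h1, h2⟩
        exact ⟨A 0 0, h1, by ext i j; exact h2 i j⟩
    rw [hset]
    refine MeasurableSet.inter ((hev 0 0) measurableSet_Ioo) ?_
    refine MeasurableSet.iInter fun i => MeasurableSet.iInter fun j => ?_
    exact measurableSet_eq_fun (hev i j) ((hpsi i j).comp (hev 0 0))
  · rintro A ⟨γ, hγ, rfl⟩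
    have h2 : 0 ≤ 1 - γ^2 := by nlinarith [hγ.1, hγ.2]
    refine ⟨psi0_mem γ h2, ?_⟩
    rw [psi0_00, abs_lt]
    exact ⟨hγ.1, hγ.2⟩
  · intro ψ hψ hγ
    ext A
    simp only [Set.mem_setOf_eq, Set.mem_singleton_iff]
    constructor
    · rintro ⟨⟨h₁, k₁, hh, hk, hA⟩, γ, hγI, hA'⟩
      have h00 : A 0 0 = ψ 0 0 := by rw [hA, orbit_entry_00]
      have hγ00 : γ = ψ 0 0 := by rw [← h00, hA', psi0_00]
      rw [hA', hγ00]
    · rintro rfl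
      obtain ⟨h₁, k₁, hh, hk, heq⟩ := orbit_psi0 ψ hψ hγ
      refine ⟨⟨h₁, k₁, hh, hk, heq⟩, ψ 0 0, ?_, rfl⟩
      have := abs_lt.mp hγ
      exact ⟨this.1, this.2⟩
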